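/- In 𝔽₂₃, define n_j = 2^(3^j) for j ∈ ℕ, Z = {0} ∪ ⋃_{j odd} ( (n_j^{−3}, n_j^{−1}] ∪ [−n_j^{−1}, −n_j^{−3}) ) ⊆ ℝ, 𝒞 = {x ∈ ℝ⁵ : x₂ ≥ 0, x₄ ≥ 0, x₅² ≤ 2x₂³x₄}, E = {x ∈ ℝ⁵ : x₂ ≥ 0, x₄ ≥ 0, and ∃ t ∈ Z, (x₅ − t)² ≤ 2x₂³x₄}, and E₂ = {x ∈ ℝ⁵ : x₂ ≥ 0 and x₄ ≥ 0}. Let δ_r(x) = (r x₁, r x₂, r² x₃, r³ x₄, r³ x₅) be the intrinsic dilations, and set λ_ℓ = n_{2ℓ+1}^{2/3} and μ_ℓ = n_{2ℓ}^{2/3} for ℓ ≥ 1. Then for every R > 0, the Lebesgue measure of the symmetric difference (δ_{λ_ℓ}(E) Δ E₂) intersected with the Euclidean ball B(0, R) tends to 0 as ℓ → ∞, and the Lebesgue measure of (δ_{μ_ℓ}(E) Δ 𝒞) ∩ B(0, R) tends to 0 as ℓ → ∞; moreover 𝒞 ≠ E₂. Hence E admits two distinct blow-ups at the origin along the two sequences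 of dilations. -/

import Mathlib

open MeasureTheory Set Filter

/-- `n_j = 2^(3^j)`. -/
def nseq (j : ℕ) : ℕ := 2 ^ (3 ^ j)

/-- The set `Z = {0} ∪ ⋃_{j odd} ((n_j⁻³, n_j⁻¹] ∪ [−n_j⁻¹, −n_j⁻³)) ⊆ ℝ`. -/
noncomputable def Zset : Set ℝ :=
  {0} ∪ ⋃ (j : ℕ) (_ : Odd j),
    (Ioc (((nseq j : ℝ)) ^ 3)⁻¹ ((nseq j : ℝ))⁻¹ ∪
     Ico (-((nseq j : ℝ))⁻¹) (-((((nseq j : ℝ)) ^ 3)⁻¹)))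

/-- The cone `𝒞 = {x : x₂ ≥ 0, x₄ ≥ 0, x₅² ≤ 2x₂³x₄}` (coordinates indexed from `0`). -/
noncomputable def Cone : Set (Fin 5 → ℝ) :=
  {x | 0 ≤ x 1 ∧ 0 ≤ x 3 ∧ (x 4) ^ 2 ≤ 2 * (x 1) ^ 3 * x 3}

/-- `E = ⋃_{t ∈ Z} (𝒞 + t e₅)`. -/
noncomputable def Eset : Set (Fin 5 → ℝ) :=
  {x | 0 ≤ x 1 ∧ 0 ≤ x 3 ∧ ∃ t ∈ Zset, (x 4 - t) ^ 2 ≤ 2 * (x 1) ^ 3 * x 3}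

/-- The half-space `E₂ = {x : x₂ ≥ 0, x₄ ≥ 0}`. -/
noncomputable def E2 : Set (Fin 5 → ℝ) := {x | 0 ≤ x 1 ∧ 0 ≤ x 3}

/-- The intrinsic dilations of `𝔽₂₃` in exponential coordinates of the second kind. -/
noncomputable def dil (r : ℝ) (x : Fin 5 → ℝ) : Fin 5 → ℝ :=
  ![r * x 0, r * x 1, r ^ 2 * x 2, r ^ 3 * x 3, r ^ 3 * x 4]

/- ## Auxiliary lemmas -/

lemma dil_dil (a b : ℝ) (x : Fin 5 → ℝ) : dil a (dil b x) = dil (a * b) x := by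
  funext i
  fin_cases i <;>
    simp [dil, Matrix.cons_val_zero, Matrix.cons_val_one, Matrix.head_cons,
      Matrix.cons_val_two, Matrix.cons_val_three, Matrix.cons_val_four, Matrix.tail_cons] <;>
    ring

lemma dil_one (x : Fin 5 → ℝ) : dil 1 x = x := by
  funext i
  fin_cases i <;>
    simp [dil, Matrix.cons_val_zero, Matrix.cons_val_one, Matrix.head_cons,
      Matrix.cons_val_two, Matrix.cons_val_three, Matrix.cons_val_four, Matrix.tail_cons]

lemma dil_apply1 (r : ℝ) (x : Fin 5 → ℝ) : dil r x 1 = r * x 1 := by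
  simp [dil]
lemma dil_apply3 (r : ℝ) (x : Fin 5 → ℝ) : dil r x 3 = r ^ 3 * x 3 := by
  simp [dil, Matrix.cons_val_three, Matrix.tail_cons, Matrix.head_cons]
lemma dil_apply4 (r : ℝ) (x : Fin 5 → ℝ) : dil r x 4 = r ^ 3 * x 4 := by
  simp [dil, Matrix.cons_val_four, Matrix.tail_cons, Matrix.head_cons]

lemma mem_dil_image {r : ℝ} (hr : 0 < r) (y : Fin 5 → ℝ) :
    y ∈ dil r '' Eset ↔
      0 ≤ y 1 ∧ 0 ≤ y 3 ∧ ∃ t ∈ Zset, (y 4 - r ^ 3 * t) ^ 2 ≤ 2 * (y 1) ^ 3 * y 3 := by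
  have himg : y ∈ dil r '' Eset ↔ dil r⁻¹ y ∈ Eset := by
    constructor
    · rintro ⟨x, hx, rfl⟩
      rwa [dil_dil, inv_mul_cancel₀ hr.ne', dil_one]
    · intro h
      exact ⟨dil r⁻¹ y, h, by rw [dil_dil, mul_inv_cancel₀ hr.ne', dil_one]⟩
  rw [himg]
  simp only [Eset, mem_setOf_eq, dil_apply1, dil_apply3, dil_apply4]
  have i1 : 0 ≤ r⁻¹ * y 1 ↔ 0 ≤ y 1 := mul_nonneg_iff_of_pos_left (by positivity)
  have i3 : 0 ≤ r⁻¹ ^ 3 * y 3 ↔ 0 ≤ y 3 := mul_nonneg_iff_of_pos_left (by positivity)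
  have i4 : ∀ t : ℝ,
      (r⁻¹ ^ 3 * y 4 - t) ^ 2 ≤ 2 * (r⁻¹ * y 1) ^ 3 * (r⁻¹ ^ 3 * y 3) ↔
        (y 4 - r ^ 3 * t) ^ 2 ≤ 2 * (y 1) ^ 3 * y 3 := by
    intro t
    have h3 : r⁻¹ ^ 3 * r ^ 3 = 1 := by
      rw [← mul_pow, inv_mul_cancel₀ hr.ne', one_pow]
    have e1 : (r⁻¹ ^ 3 * y 4 - t) ^ 2 = r⁻¹ ^ 6 * (y 4 - r ^ 3 * t) ^ 2 := by
      linear_combination (2 * r⁻¹ ^ 3 * y 4 * t - t ^ 2 * (r⁻¹ ^ 3 * r ^ 3 + 1)) * h3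
    have e2 : 2 * (r⁻¹ * y 1) ^ 3 * (r⁻¹ ^ 3 * y 3) = r⁻¹ ^ 6 * (2 * (y 1) ^ 3 * y 3) := by
      ring
    rw [e1, e2]
    exact mul_le_mul_iff_right₀ (by positivity)
  rw [i1]
  exact and_congr_right fun _ => by
    rw [i3]
    exact and_congr_right fun _ => exists_congr fun t => and_congr_right fun _ => i4 t

lemma nseq_pos (j : ℕ) : 0 < nseq j := Nat.pow_pos (by norm_num)

lemma nseq_cast_pos (j : ℕ) : (0:ℝ) < (nseq j : ℝ) := by exact_mod_cast nseq_pos j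

lemma nseq_one_le (j : ℕ) : (1:ℝ) ≤ (nseq j : ℝ) := by
  exact_mod_cast Nat.one_le_iff_ne_zero.mpr (nseq_pos j).ne'

lemma nseq_mono : Monotone nseq := fun i j h =>
  Nat.pow_le_pow_right (by norm_num) (Nat.pow_le_pow_right (by norm_num) h)

lemma nseq_cube (j : ℕ) : nseq j ^ 3 = nseq (j + 1) := by
  rw [nseq, nseq, ← pow_mul, pow_succ]

lemma nseq_cast_cube (j : ℕ) : ((nseq j : ℝ)) ^ 3 = (nseq (j + 1) : ℝ) := by
  rw [← nseq_cube]; push_cast; ring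

lemma nseq_le_self (j : ℕ) : j ≤ nseq j :=
  le_trans (le_of_lt (Nat.lt_two_pow_self))
    (Nat.pow_le_pow_right (by norm_num) (Nat.le_of_lt (Nat.lt_pow_self (by norm_num))))

lemma nseq_tendsto : Tendsto (fun ℓ : ℕ => ((nseq (2 * ℓ) : ℝ))) atTop atTop := by
  apply tendsto_natCast_atTop_atTop.comp
  apply tendsto_atTop_mono (fun ℓ => le_trans (by omega : ℓ ≤ 2 * ℓ) (nseq_le_self (2 * ℓ)))
  exact tendsto_id

lemma nseq_tendsto' : Tendsto (fun ℓ : ℕ => ((nseq (2 * ℓ + 1) : ℝ))) atTop atTop := by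
  apply tendsto_natCast_atTop_atTop.comp
  apply tendsto_atTop_mono (fun ℓ => le_trans (by omega : ℓ ≤ 2 * ℓ + 1) (nseq_le_self _))
  exact tendsto_id

lemma rpow_cube (n : ℕ) : (((n:ℝ)) ^ ((2:ℝ)/3)) ^ 3 = (n:ℝ) ^ 2 := by
  rw [← Real.rpow_natCast ((n:ℝ) ^ ((2:ℝ)/3)) 3, ← Real.rpow_mul (Nat.cast_nonneg n)]
  norm_num

lemma vol_tendsto_zero {S : ℕ → Set (Fin 5 → ℝ)} (hmeas : ∀ n, MeasurableSet (S n))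
    (hanti : Antitone S) (hempty : ⋂ n, S n = ∅) (hfin : volume (S 0) ≠ ⊤) :
    Tendsto (fun n => volume (S n)) atTop (nhds 0) := by
  have := tendsto_measure_iInter_atTop (μ := volume)
    (fun n => (hmeas n).nullMeasurableSet) hanti ⟨0, hfin⟩
  rw [hempty] at this
  simpa [Function.comp_def] using this

lemma zero_mem_Zset : (0:ℝ) ∈ Zset := mem_union_left _ rfl

lemma abs_lt_of_ball {y : Fin 5 → ℝ} {R : ℝ} (h : y ∈ Metric.ball (0 : Fin 5 → ℝ) R)
    (i : Fin 5) : |y i| < R :=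
  lt_of_le_of_lt (by simpa [Real.dist_eq] using dist_le_pi_dist y 0 i) (Metric.mem_ball.mp h)

set_option maxHeartbeats 1000000

/-- Along the dilation factors `λ_ℓ = n_{2ℓ+1}^{2/3}` the dilates of `E` converge
locally in measure to the half-space `E₂`, while along `μ_ℓ = n_{2ℓ}^{2/3}` they
converge locally in measure to the cone `𝒞 ≠ E₂`: the set `E` has two distinct blow-ups
at the origin. -/
theorem F23_nonunique_blowups :
    (∀ R : ℝ, 0 < R →
      Tendsto (fun ℓ : ℕ =>
          volume ((symmDiff (dil ((nseq (2 * ℓ + 1) : ℝ) ^ ((2 : ℝ) / 3)) '' Eset) E2) ∩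
            Metric.ball (0 : Fin 5 → ℝ) R))
        atTop (nhds 0)) ∧
    (∀ R : ℝ, 0 < R →
      Tendsto (fun ℓ : ℕ =>
          volume ((symmDiff (dil ((nseq (2 * ℓ) : ℝ) ^ ((2 : ℝ) / 3)) '' Eset) Cone) ∩
            Metric.ball (0 : Fin 5 → ℝ) R))
        atTop (nhds 0)) ∧
    Cone ≠ E2 := by
  refine ⟨?_, ?_, ?_⟩
  · -- blow-up along odd dilations: limit is the half-space E2
    intro R hR
    set S : ℕ → Set (Fin 5 → ℝ) := fun ℓ =>
      Metric.ball (0 : Fin 5 → ℝ) R ∩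
        ({y | y 4 ≠ 0} ∩ {y | |y 4| ≤ ((nseq (2 * ℓ + 1) : ℝ))⁻¹}) with hS
    have hmeas : ∀ ℓ, MeasurableSet (S ℓ) := fun ℓ =>
      Metric.isOpen_ball.measurableSet.inter
        ((((measurableSet_singleton (0:ℝ)).compl.preimage (measurable_pi_apply 4))).inter
          (measurableSet_le (measurable_pi_apply 4).abs measurable_const))
    have hanti : Antitone S := by
      intro a b hab
      refine inter_subset_inter_right _ (inter_subset_inter_right _ ?_)
      intro y hy
      exact le_trans hy (inv_anti₀ (nseq_cast_pos _)
        (by exact_mod_cast nseq_mono (by omega : 2 * a + 1 ≤ 2 * b + 1)))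
    have hempty : ⋂ ℓ, S ℓ = ∅ := by
      ext y
      simp only [mem_iInter, mem_inter_iff, mem_setOf_eq, mem_empty_iff_false, iff_false,
        not_forall]
      by_contra hcon
      push_neg at hcon
      have h0 : y 4 ≠ 0 := (hcon 0).2.1
      obtain ⟨ℓ, hℓ⟩ := (nseq_tendsto'.eventually_gt_atTop (|y 4|⁻¹)).exists
      have habs : 0 < |y 4| := abs_pos.mpr h0
      have h1 : ((nseq (2 * ℓ + 1) : ℝ))⁻¹ < |y 4| := inv_lt_of_inv_lt₀ habs hℓ
      exact absurd ((hcon ℓ).2.2) (not_le.mpr h1)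
    have hfin : volume (S 0) ≠ ⊤ :=
      ((measure_mono inter_subset_left).trans_lt measure_ball_lt_top).ne
    have hlim := vol_tendsto_zero hmeas hanti hempty hfin
    refine tendsto_of_tendsto_of_tendsto_of_le_of_le' tendsto_const_nhds hlim
      (Eventually.of_forall fun ℓ => zero_le) ?_
    filter_upwards [nseq_tendsto'.eventually_gt_atTop R] with ℓ hNR
    apply measure_mono
    intro y hy
    obtain ⟨hsd, hball⟩ := hy
    set N : ℝ := (nseq (2 * ℓ + 1) : ℝ) with hNdef
    have hN0 : (0:ℝ) < N := nseq_cast_pos _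
    have hr : (0:ℝ) < N ^ ((2:ℝ)/3) := Real.rpow_pos_of_pos hN0 _
    have hr3 : (N ^ ((2:ℝ)/3)) ^ 3 = N ^ 2 := rpow_cube _
    have hy4 : |y 4| < R := abs_lt_of_ball hball 4
    rcases hsd with ⟨hA, hnE2⟩ | ⟨hE2, hnA⟩
    · exfalso
      rw [mem_dil_image hr] at hA
      exact hnE2 ⟨hA.1, hA.2.1⟩
    · refine ⟨hball, ?_, ?_⟩ <;> simp only [mem_setOf_eq]
      · -- y 4 ≠ 0
        intro h0
        apply hnA
        rw [mem_dil_image hr]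
        refine ⟨hE2.1, hE2.2, 0, zero_mem_Zset, ?_⟩
        rw [h0]
        have e0 : ((0:ℝ) - (N ^ ((2:ℝ)/3)) ^ 3 * 0) ^ 2 = 0 := by ring
        rw [e0]
        exact mul_nonneg (mul_nonneg (by norm_num) (pow_nonneg hE2.1 3)) hE2.2
      · -- |y 4| ≤ N⁻¹
        by_contra hgt
        push_neg at hgt
        apply hnA
        rw [mem_dil_image hr]
        have hNne : N ^ 2 ≠ 0 := by positivity
        refine ⟨hE2.1, hE2.2, y 4 / N ^ 2, ?_, ?_⟩
        · -- membership in Zset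
          refine mem_union_right _ (mem_iUnion.mpr ⟨2 * ℓ + 1, mem_iUnion.mpr ⟨⟨ℓ, rfl⟩, ?_⟩⟩)
          have hgt : N⁻¹ < |y 4| := hgt
          rcases (abs_pos.mp (lt_of_le_of_lt (inv_nonneg.mpr hN0.le) hgt)).lt_or_gt
            with hneg | hpos
          · -- y 4 < 0 : negative interval
            have habs : N⁻¹ < |y 4| := hgt
            rw [abs_of_neg hneg] at habs
            refine Or.inr ⟨?_, ?_⟩
            · rw [le_div_iff₀ (by positivity : (0:ℝ) < N ^ 2)]
              have hy4R : -N < y 4 := by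
                have : -R < y 4 := (abs_lt.mp hy4).1
                linarith
              have : -N⁻¹ * N ^ 2 = -N := by field_simp
              rw [this]
              linarith
            · rw [div_lt_iff₀ (by positivity : (0:ℝ) < N ^ 2)]
              have h4 : y 4 < -N⁻¹ := by linarith
              have : -(N ^ 3)⁻¹ * N ^ 2 = -N⁻¹ := by field_simp
              rw [this]
              exact h4
          · -- 0 < y 4 : positive interval
            refine Or.inl ⟨?_, ?_⟩
            · rw [lt_div_iff₀ (by positivity : (0:ℝ) < N ^ 2)]
              have h4 : N⁻¹ < y 4 := by
                have habs : N⁻¹ < |y 4| := hgt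
                rwa [abs_of_pos hpos] at habs
              have : (N ^ 3)⁻¹ * N ^ 2 = N⁻¹ := by field_simp
              rw [this]
              exact h4
            · rw [div_le_iff₀ (by positivity : (0:ℝ) < N ^ 2)]
              have : N⁻¹ * N ^ 2 = N := by field_simp
              rw [this]
              have : y 4 < R := (abs_lt.mp hy4).2
              linarith
        · rw [hr3]
          have hzero : y 4 - N ^ 2 * (y 4 / N ^ 2) = 0 := by field_simp; ring
          rw [hzero]
          have : (0:ℝ) ^ 2 = 0 := by norm_num
          rw [this]
          exact mul_nonneg (mul_nonneg (by norm_num) (pow_nonneg hE2.1 3)) hE2.2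
  · -- blow-up along even dilations: limit is the cone
    intro R hR
    set S : ℕ → Set (Fin 5 → ℝ) := fun ℓ =>
      Metric.ball (0 : Fin 5 → ℝ) R ∩
        ({y | 2 * (y 1) ^ 3 * y 3 < (y 4) ^ 2} ∩
         {y | (y 4) ^ 2 ≤ 2 * (y 1) ^ 3 * y 3 + (2 * R + 1) * ((nseq (2 * ℓ) : ℝ))⁻¹}) with hS
    have hmeas : ∀ ℓ, MeasurableSet (S ℓ) := by
      intro ℓ
      have m1 : Measurable fun y : Fin 5 → ℝ => 2 * (y 1) ^ 3 * y 3 := by fun_prop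
      have m4 : Measurable fun y : Fin 5 → ℝ => (y 4) ^ 2 := by fun_prop
      exact Metric.isOpen_ball.measurableSet.inter
        ((measurableSet_lt m1 m4).inter (measurableSet_le m4 (by fun_prop)))
    have hanti : Antitone S := by
      intro a b hab
      refine inter_subset_inter_right _ (inter_subset_inter_right _ ?_)
      intro y hy
      simp only [mem_setOf_eq] at hy ⊢
      have hinvle : ((nseq (2 * b) : ℝ))⁻¹ ≤ ((nseq (2 * a) : ℝ))⁻¹ :=
        inv_anti₀ (nseq_cast_pos _)
          (by exact_mod_cast nseq_mono (by omega : 2 * a ≤ 2 * b))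
      nlinarith [hy, hinvle, hR]
    have hempty : ⋂ ℓ, S ℓ = ∅ := by
      ext y
      simp only [mem_iInter, mem_inter_iff, mem_setOf_eq, mem_empty_iff_false, iff_false,
        not_forall]
      by_contra hcon
      push_neg at hcon
      have hlt : 2 * (y 1) ^ 3 * y 3 < (y 4) ^ 2 := (hcon 0).2.1
      set d : ℝ := (y 4) ^ 2 - 2 * (y 1) ^ 3 * y 3 with hd
      have hdpos : 0 < d := by simp [hd]; linarith
      obtain ⟨ℓ, hℓ⟩ := (nseq_tendsto.eventually_gt_atTop ((2 * R + 1) / d)).exists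
      have hcontra : (y 4) ^ 2 ≤ 2 * (y 1) ^ 3 * y 3 + (2 * R + 1) * ((nseq (2 * ℓ) : ℝ))⁻¹ :=
        (hcon ℓ).2.2
      have hNpos : (0:ℝ) < (nseq (2 * ℓ) : ℝ) := nseq_cast_pos _
      have h2R : (0:ℝ) < 2 * R + 1 := by linarith
      have hkey : (2 * R + 1) * ((nseq (2 * ℓ) : ℝ))⁻¹ < d := by
        rw [← div_eq_mul_inv, div_lt_iff₀ hNpos]
        rw [div_lt_iff₀ hdpos] at hℓ
        nlinarith [hℓ]
      rw [hd] at hkey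
      linarith
    have hfin : volume (S 0) ≠ ⊤ :=
      ((measure_mono inter_subset_left).trans_lt measure_ball_lt_top).ne
    have hlim := vol_tendsto_zero hmeas hanti hempty hfin
    refine tendsto_of_tendsto_of_tendsto_of_le_of_le' tendsto_const_nhds hlim
      (Eventually.of_forall fun ℓ => zero_le) ?_
    filter_upwards [nseq_tendsto.eventually_ge_atTop (2 * R ^ 2 + 2 * R)] with ℓ hNR
    apply measure_mono
    intro y hy
    obtain ⟨hsd, hball⟩ := hy
    set N : ℝ := (nseq (2 * ℓ) : ℝ) with hNdef
    have hN0 : (0:ℝ) < N := nseq_cast_pos _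
    have hN1 : (1:ℝ) ≤ N := nseq_one_le _
    have hr : (0:ℝ) < N ^ ((2:ℝ)/3) := Real.rpow_pos_of_pos hN0 _
    have hr3 : (N ^ ((2:ℝ)/3)) ^ 3 = N ^ 2 := rpow_cube _
    have hy4 : |y 4| < R := abs_lt_of_ball hball 4
    have hy1 : |y 1| < R := abs_lt_of_ball hball 1
    have hy3 : |y 3| < R := abs_lt_of_ball hball 3
    rcases hsd with ⟨hA, hnC⟩ | ⟨hC, hnA⟩
    · -- y ∈ dil E, y ∉ Cone
      rw [mem_dil_image hr] at hA
      obtain ⟨h1, h3, t, htZ, hineq⟩ := hA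
      rw [hr3] at hineq
      have hlt : 2 * (y 1) ^ 3 * y 3 < (y 4) ^ 2 := by
        by_contra hle
        push_neg at hle
        exact hnC ⟨h1, h3, hle⟩
      refine ⟨hball, hlt, ?_⟩
      -- bound on 2 y1³ y3
      have ha : 2 * (y 1) ^ 3 * y 3 ≤ 2 * R ^ 4 := by
        have hy1R : y 1 ≤ R := le_of_lt (lt_of_le_of_lt (le_abs_self _) hy1)
        have hy3R : y 3 ≤ R := le_of_lt (lt_of_le_of_lt (le_abs_self _) hy3)
        have h13 : (y 1) ^ 3 ≤ R ^ 3 := pow_le_pow_left₀ h1 hy1R 3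
        nlinarith [pow_nonneg h1 3]
      -- analysis of t ∈ Zset
      rcases htZ with ht0 | htJ
      · -- t = 0 : contradiction with hlt
        exfalso
        rw [mem_singleton_iff] at ht0
        rw [ht0, mul_zero, sub_zero] at hineq
        linarith
      · rw [mem_iUnion] at htJ
        obtain ⟨j, htJ⟩ := htJ
        rw [mem_iUnion] at htJ
        obtain ⟨hodd, htJ⟩ := htJ
        set M : ℝ := (nseq j : ℝ) with hMdef
        have hM0 : (0:ℝ) < M := nseq_cast_pos _
        set s : ℝ := N ^ 2 * t with hs
        -- dichotomy on j
        rcases lt_or_ge j (2 * ℓ) with hjlt | hjge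
        · -- j < 2ℓ : |s| > N, contradiction
          exfalso
          have hM3N : M ^ 3 ≤ N := by
            rw [hMdef, hNdef, nseq_cast_cube]
            exact_mod_cast nseq_mono (by omega : j + 1 ≤ 2 * ℓ)
          have hinv : (M ^ 3)⁻¹ ≥ N⁻¹ := inv_anti₀ (by positivity) hM3N
          have hsbig : N ≤ s ∨ s ≤ -N := by
            rcases htJ with ⟨htl, _⟩ | ⟨_, htu⟩
            · -- positive: t > (M³)⁻¹
              left
              have hspos : N ^ 2 * (M ^ 3)⁻¹ ≤ s := by
                rw [hs]
                exact mul_le_mul_of_nonneg_left htl.le (by positivity)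
              have h1' : N ^ 2 * N⁻¹ ≤ N ^ 2 * (M ^ 3)⁻¹ :=
                mul_le_mul_of_nonneg_left hinv (by positivity)
              have hNN : N ^ 2 * N⁻¹ = N := by field_simp
              rw [hNN] at h1'
              exact le_trans h1' hspos
            · -- negative: t < -(M³)⁻¹
              right
              have hsneg : s ≤ N ^ 2 * (-(M ^ 3)⁻¹) := by
                rw [hs]
                exact mul_le_mul_of_nonneg_left htu.le (by positivity)
              have h1' : N ^ 2 * (-(M ^ 3)⁻¹) ≤ N ^ 2 * (-N⁻¹) := by
                apply mul_le_mul_of_nonneg_left _ (by positivity)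
                linarith
              have hNN : N ^ 2 * (-N⁻¹) = -N := by field_simp
              rw [hNN] at h1'
              exact le_trans hsneg h1'
          have hy4R : -R < y 4 ∧ y 4 < R := abs_lt.mp hy4
          have hsq : (y 4 - s) ^ 2 ≤ 2 * R ^ 4 := le_trans hineq ha
          rcases hsbig with hbig | hbig
          · have hA1 : (0:ℝ) ≤ (s - y 4 - (N - R)) * (s - y 4 + (N - R)) :=
              mul_nonneg (by linarith [hy4R.2, hbig])
                (by nlinarith [hy4R.2, hbig, hNR, hR, sq_nonneg R])
            have hA2 : (0:ℝ) ≤ (N - R - (2 * R ^ 2 + R)) * (N - R + (2 * R ^ 2 + R)) :=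
              mul_nonneg (by nlinarith [hR]) (by nlinarith [hR])
            nlinarith [hsq, hA1, hA2, pow_pos hR 2, pow_pos hR 3, pow_pos hR 4]
          · have hA1 : (0:ℝ) ≤ (y 4 - s - (N - R)) * (y 4 - s + (N - R)) :=
              mul_nonneg (by nlinarith [hy4R.1, hbig, hNR, hR, sq_nonneg R])
                (by nlinarith [hy4R.1, hbig, hNR, hR, sq_nonneg R])
            have hA2 : (0:ℝ) ≤ (N - R - (2 * R ^ 2 + R)) * (N - R + (2 * R ^ 2 + R)) :=
              mul_nonneg (by nlinarith [hR]) (by nlinarith [hR])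
            nlinarith [hsq, hA1, hA2, pow_pos hR 2, pow_pos hR 3, pow_pos hR 4]
        · -- j ≥ 2ℓ, j odd even ⇒ j ≥ 2ℓ+1 : |s| ≤ N⁻¹
          have hjge' : 2 * ℓ + 1 ≤ j := by
            rcases hodd with ⟨m, hm⟩
            omega
          have hN3M : N ^ 3 ≤ M := by
            rw [hMdef, hNdef, nseq_cast_cube]
            exact_mod_cast nseq_mono hjge'
          have hinv : M⁻¹ ≤ (N ^ 3)⁻¹ := inv_anti₀ (by positivity) hN3M
          have hNN : N ^ 2 * (N ^ 3)⁻¹ = N⁻¹ := by field_simp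
          have hssmall : |s| ≤ N⁻¹ := by
            rcases htJ with ⟨htl, htu⟩ | ⟨htl, htu⟩
            · -- positive: 0 < t ≤ M⁻¹
              have hspos : 0 ≤ s := by
                rw [hs]
                have : (0:ℝ) < t := lt_trans (by positivity) htl
                positivity
              rw [abs_of_nonneg hspos, hs]
              calc N ^ 2 * t ≤ N ^ 2 * M⁻¹ := mul_le_mul_of_nonneg_left htu (by positivity)
                _ ≤ N ^ 2 * (N ^ 3)⁻¹ := mul_le_mul_of_nonneg_left hinv (by positivity)
                _ = N⁻¹ := hNN
            · -- negative: -M⁻¹ ≤ t < 0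
              have hsneg : s ≤ 0 := by
                rw [hs]
                have ht0 : t < 0 := lt_of_lt_of_le htu (neg_nonpos.mpr (by positivity))
                nlinarith
              rw [abs_of_nonpos hsneg, hs]
              have : -(N ^ 2 * t) ≤ N ^ 2 * M⁻¹ := by
                have := mul_le_mul_of_nonneg_left htl (by positivity : (0:ℝ) ≤ N ^ 2)
                nlinarith
              calc -(N ^ 2 * t) ≤ N ^ 2 * M⁻¹ := this
                _ ≤ N ^ 2 * (N ^ 3)⁻¹ := mul_le_mul_of_nonneg_left hinv (by positivity)
                _ = N⁻¹ := hNN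
          -- conclude the shell bound
          have hsb := abs_le.mp hssmall
          have hNinv0 : (0:ℝ) < N⁻¹ := by positivity
          have hNinv1 : N⁻¹ ≤ 1 := by
            rw [inv_le_one_iff₀]
            right; exact hN1
          have h2ys : 2 * y 4 * s ≤ 2 * R * N⁻¹ := by
            calc 2 * y 4 * s ≤ |2 * y 4 * s| := le_abs_self _
              _ = 2 * |y 4| * |s| := by rw [abs_mul, abs_mul]; simp [abs_of_nonneg]
              _ ≤ 2 * R * N⁻¹ := by
                  apply mul_le_mul _ hssmall (abs_nonneg _) (by positivity)
                  nlinarith [abs_nonneg (y 4)]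
          show (y 4) ^ 2 ≤ 2 * (y 1) ^ 3 * y 3 + (2 * R + 1) * ((nseq (2 * ℓ) : ℝ))⁻¹
          nlinarith [hineq, sq_nonneg s, h2ys, hNinv0.le]
    · -- y ∈ Cone, y ∉ dil E : impossible since Cone ⊆ dil E
      exfalso
      apply hnA
      rw [mem_dil_image hr]
      exact ⟨hC.1, hC.2.1, 0, zero_mem_Zset, by
        rw [mul_zero, sub_zero]; exact hC.2.2⟩
  · -- Cone ≠ E2
    intro h
    have hx : (![0,0,0,0,1] : Fin 5 → ℝ) ∈ E2 := by
      constructor <;> norm_num [Matrix.cons_val_one, Matrix.head_cons,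
        Matrix.cons_val_three, Matrix.tail_cons]
    rw [← h] at hx
    have := hx.2.2
    norm_num [Matrix.cons_val_four, Matrix.cons_val_one, Matrix.head_cons,
      Matrix.cons_val_three, Matrix.tail_cons] at this
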